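/- (Model construction for K_nD and D_nD) Let L be K_nD or D_nD, let P ⊆ 𝒫 be finite, p ∈ P, k ≥ 0, and δ ∈ D^P_k(L). For every L-model (M′,s′), if M′,s′ ⊨ δ^p, then there is an L-model (M,s) such that M,s ⊨ δ and (M,s) ≅^col_p (M′,s′). -/

import Mathlib

/-!
Common framework: multi-agent epistemic modal logic with distributed knowledge.
Agents are `Fin n`, atoms are natural numbers.
-/

namespace DKLogic

/-- Formulas of the language `L_D`: atoms, negation, conjunction, disjunction and the
distributed-knowledge modality `D_B` for nonempty sets `B` of agents (together with the
constants `⊤`/`⊥`, which the paper uses as the empty conjunction/disjunction). -/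
inductive Formula (n : ℕ) : Type
  | top : Formula n
  | bot : Formula n
  | atom : ℕ → Formula n
  | neg : Formula n → Formula n
  | and : Formula n → Formula n → Formula n
  | or : Formula n → Formula n → Formula n
  | D : {B : Finset (Fin n) // B.Nonempty} → Formula n → Formula n

namespace Formula

/-- Modal depth of a formula. -/
def depth {n : ℕ} : Formula n → ℕ
  | top => 0
  | bot => 0
  | atom _ => 0
  | neg φ => depth φ
  | and φ ψ => max (depth φ) (depth ψ)
  | or φ ψ => max (depth φ) (depth ψ)
  | D _ φ => depth φ + 1

/-- The atoms occurring in a formula. -/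
def atoms {n : ℕ} : Formula n → Finset ℕ
  | top => ∅
  | bot => ∅
  | atom q => {q}
  | neg φ => atoms φ
  | and φ ψ => atoms φ ∪ atoms ψ
  | or φ ψ => atoms φ ∪ atoms ψ
  | D _ φ => atoms φ

end Formula

/-- A Kripke model over world type `W` with `n` agents. -/
structure KModel (n : ℕ) (W : Type) where
  R : Fin n → W → W → Prop
  V : W → Set ℕ

/-- The distributed accessibility relation `R_B = ⋂_{i ∈ B} R_i`. -/
def KModel.RB {n : ℕ} {W : Type} (M : KModel n W) (B : Finset (Fin n)) (s t : W) : Prop :=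
  ∀ i ∈ B, M.R i s t

/-- Satisfaction. -/
def Sat {n : ℕ} {W : Type} (M : KModel n W) : W → Formula n → Prop
  | _, .top => True
  | _, .bot => False
  | s, .atom q => q ∈ M.V s
  | s, .neg φ => ¬ Sat M s φ
  | s, .and φ ψ => Sat M s φ ∧ Sat M s ψ
  | s, .or φ ψ => Sat M s φ ∨ Sat M s ψ
  | s, .D B φ => ∀ t : W, M.RB B.1 s t → Sat M t φ

/-- Seriality of a relation. -/
def Serial {W : Type} (R : W → W → Prop) : Prop := ∀ x, ∃ y, R x y

/-- Euclideanness of a relation. -/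
def Euclidean {W : Type} (R : W → W → Prop) : Prop := ∀ x y z, R x y → R x z → R y z

/-- The six modal systems. -/
inductive MSys : Type
  | K | D | T | K45 | KD45 | S5

/-- `L`-models: frame conditions on each accessibility relation for each system. -/
def IsModel {n : ℕ} {W : Type} : MSys → KModel n W → Prop
  | .K, _ => True
  | .D, M => ∀ i, Serial (M.R i)
  | .T, M => ∀ i, Reflexive (M.R i)
  | .K45, M => ∀ i, Transitive (M.R i) ∧ Euclidean (M.R i)
  | .KD45, M => ∀ i, Serial (M.R i) ∧ Transitive (M.R i) ∧ Euclidean (M.R i)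
  | .S5, M => ∀ i, Reflexive (M.R i) ∧ Transitive (M.R i) ∧ Euclidean (M.R i)

/-- Semantic consequence over `L`-models. -/
def Entails {n : ℕ} (L : MSys) (φ ψ : Formula n) : Prop :=
  ∀ (W : Type) (M : KModel n W), IsModel L M → ∀ s : W, Sat M s φ → Sat M s ψ

/-- Semantic equivalence over `L`-models. -/
def EquivL {n : ℕ} (L : MSys) (φ ψ : Formula n) : Prop :=
  Entails L φ ψ ∧ Entails L ψ φ

/-- `L`-satisfiability. -/
def SatL {n : ℕ} (L : MSys) (φ : Formula n) : Prop :=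
  ∃ (W : Type) (M : KModel n W) (s : W), IsModel L M ∧ Sat M s φ

/-- Collective `p`-bisimulation between two pointed models. -/
def CollPBisim {n : ℕ} {W W' : Type} (M : KModel n W) (s : W) (M' : KModel n W') (s' : W')
    (p : ℕ) : Prop :=
  ∃ ρ : W → W' → Prop, ρ s s' ∧
    ∀ u u', ρ u u' →
      ((∀ q : ℕ, q ≠ p → (q ∈ M.V u ↔ q ∈ M'.V u')) ∧
       (∀ B : Finset (Fin n), B.Nonempty → ∀ v, M.RB B u v → ∃ v', M'.RB B u' v' ∧ ρ v v') ∧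
       (∀ B : Finset (Fin n), B.Nonempty → ∀ v', M'.RB B u' v' → ∃ v, M.RB B u v ∧ ρ v v'))

/-- `ψ` is a result of forgetting `p` in `φ` in system `L`
(written `dforget_L(φ,p) ≡_L ψ` in the paper). -/
def IsForget {n : ℕ} (L : MSys) (φ : Formula n) (p : ℕ) (ψ : Formula n) : Prop :=
  ψ.atoms ⊆ φ.atoms.erase p ∧
  (∀ (W W' : Type) (M : KModel n W) (M' : KModel n W') (s : W) (s' : W'),
      IsModel L M → IsModel L M' → Sat M s φ → CollPBisim M s M' s' p → Sat M' s' ψ) ∧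
  (∀ (W' : Type) (M' : KModel n W') (s' : W'),
      IsModel L M' → Sat M' s' ψ →
      ∃ (W : Type) (M : KModel n W) (s : W), IsModel L M ∧ Sat M s φ ∧ CollPBisim M s M' s' p)

/-- `L` is closed under forgetting: `dforget_L(φ,p)` exists (as an `L`-satisfiable formula)
for every `L`-satisfiable `φ` and every atom `p`. -/
def ClosedUnderForgetting {n : ℕ} (L : MSys) : Prop :=
  ∀ (φ : Formula n) (p : ℕ), SatL L φ → ∃ ψ : Formula n, SatL L ψ ∧ IsForget L φ p ψ

/-- `ψ` is a uniform interpolant of `φ` in `L` over `P \ {p}`. -/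
def IsUI {n : ℕ} (L : MSys) (P : Finset ℕ) (p : ℕ) (φ ψ : Formula n) : Prop :=
  SatL L ψ ∧ ψ.atoms ⊆ P.erase p ∧
  ∀ χ : Formula n, p ∉ χ.atoms → (Entails L φ χ ↔ Entails L ψ χ)

/-- The uniform interpolation property for the system `L`. -/
def HasUIP {n : ℕ} (L : MSys) : Prop :=
  ∀ (P : Finset ℕ) (p : ℕ) (φ : Formula n),
    p ∈ P → φ.atoms ⊆ P → SatL L φ → ∃ ψ : Formula n, IsUI L P p φ ψ

/-! ### Canonical formulas -/

/-- Big conjunction of a list of formulas (`⊤` for the empty list). -/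
def bigAnd {n : ℕ} : List (Formula n) → Formula n
  | [] => .top
  | φ :: l => .and φ (bigAnd l)

/-- Big disjunction of a list of formulas (`⊥` for the empty list). -/
def bigOr {n : ℕ} : List (Formula n) → Formula n
  | [] => .bot
  | φ :: l => .or φ (bigOr l)

/-- An injective numerical code of formulas, used to fix a canonical ordering. -/
def fcode {n : ℕ} : Formula n → ℕ
  | .top => Nat.pair 0 0
  | .bot => Nat.pair 1 0
  | .atom q => Nat.pair 2 q
  | .neg φ => Nat.pair 3 (fcode φ)
  | .and φ ψ => Nat.pair 4 (Nat.pair (fcode φ) (fcode ψ))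
  | .or φ ψ => Nat.pair 5 (Nat.pair (fcode φ) (fcode ψ))
  | .D B φ => Nat.pair 6 (Nat.pair (B.1.sum fun i => 2 ^ (i : ℕ)) (fcode φ))

/-- Insert a formula into a strictly `fcode`-sorted list (dropping duplicates). -/
def insertF {n : ℕ} (φ : Formula n) : List (Formula n) → List (Formula n)
  | [] => [φ]
  | ψ :: l =>
      if fcode φ < fcode ψ then φ :: ψ :: l
      else if fcode φ = fcode ψ then ψ :: l
      else ψ :: insertF φ l

/-- The canonical (sorted, duplicate-free) list representing the set of formulas in `l`. -/
def normList {n : ℕ} (l : List (Formula n)) : List (Formula n) := l.foldr insertF []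

/-- The minterm of `P` that is positive exactly on `S`. -/
def minterm {n : ℕ} (P S : Finset ℕ) : Formula n :=
  bigAnd ((P.sort (· ≤ ·)).map fun q =>
    if q ∈ S then Formula.atom q else Formula.neg (Formula.atom q))

/-- The subset of `Fin n` whose characteristic bits are those of `m`. -/
def natToFinset (n m : ℕ) : Finset (Fin n) :=
  Finset.univ.filter fun i => m.testBit (i : ℕ)

/-- A canonical enumeration of all nonempty subsets of the agent set. -/
def neSubsets (n : ℕ) : List {B : Finset (Fin n) // B.Nonempty} :=
  ((List.range (2 ^ n)).map (natToFinset n)).filterMap fun B =>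
    if h : B.Nonempty then some ⟨B, h⟩ else none

/-- `∇_B Φ = D_B (⋁Φ) ∧ ⋀_{φ ∈ Φ} ¬ D_B ¬ φ`. -/
def nabla {n : ℕ} (B : {B : Finset (Fin n) // B.Nonempty}) (Φ : List (Formula n)) : Formula n :=
  Formula.and (Formula.D B (bigOr Φ))
    (bigAnd (Φ.map fun φ => Formula.neg (Formula.D B (Formula.neg φ))))

/-- Underlying data of a d-canonical formula: a set of (positive) atoms together with,
for every set `B` of agents, a list of successor data. -/
inductive CData (n : ℕ) : Type
  | mk (S : Finset ℕ) (succ : Finset (Fin n) → List (CData n)) : CData n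

/-- The positive-atom component. -/
def CData.S {n : ℕ} : CData n → Finset ℕ
  | mk S _ => S

/-- The `B`-successor data. -/
def CData.succ {n : ℕ} : CData n → Finset (Fin n) → List (CData n)
  | mk _ f => f

/-- The d-canonical formula of depth `k` over `P` determined by the data `d`:
`δ_0 ∧ ⋀_{B} ∇_B Φ_B`. -/
def toFormula {n : ℕ} (P : Finset ℕ) : ℕ → CData n → Formula n
  | 0, d => minterm P (d.S ∩ P)
  | (k+1), d =>
      Formula.and (minterm P (d.S ∩ P))
        (bigAnd ((neSubsets n).map fun B =>
          nabla B (normList ((d.succ B.1).map fun c => toFormula P k c))))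

/-- `D^P_k`: the set of d-canonical formulas of depth `k` over `P`. -/
def DP {n : ℕ} (P : Finset ℕ) (k : ℕ) : Set (Formula n) := Set.range (toFormula P k)

/-- `R_B(δ)` for `δ` the level-`k` canonical formula with data `d`:
the set of `B`-successor canonical formulas (of level `k - 1`). -/
def RBset {n : ℕ} (P : Finset ℕ) (k : ℕ) (d : CData n) (B : Finset (Fin n)) :
    Set (Formula n) :=
  {φ | ∃ c ∈ d.succ B, φ = toFormula P (k - 1) c}

/-- One pruning step `δ ↦ δ^↓` on data (first argument: the level of the input). -/
def downD {n : ℕ} : ℕ → CData n → CData n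
  | 0, d => d
  | 1, d => CData.mk d.S (fun _ => [])
  | (k+2), d => CData.mk d.S (fun B => (d.succ B).map fun c => downD (k+1) c)

/-- `l`-fold pruning `δ ↦ δ^{↓l}` on data (first argument: the level of the input). -/
def downIter {n : ℕ} : ℕ → ℕ → CData n → CData n
  | _, 0, d => d
  | k, (l+1), d => downIter (k-1) l (downD k d)

/-- Truncation `δ ↦ δ^{↑l}` on data (first argument: the level of the input). -/
def upD {n : ℕ} : ℕ → ℕ → CData n → CData n
  | _, 0, d => CData.mk d.S (fun _ => [])
  | 0, (_+1), d => d
  | (k+1), (l+1), d => CData.mk d.S (fun B => (d.succ B).map fun c => upD k l c)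

/-- The canonical formula `δ` of level `k` with data `d`. -/
def cf {n : ℕ} (P : Finset ℕ) (k : ℕ) (d : CData n) : Formula n := toFormula P k d

/-- `δ^{↓l}` (a canonical formula of level `k - l`). -/
def cfDown {n : ℕ} (P : Finset ℕ) (k l : ℕ) (d : CData n) : Formula n :=
  toFormula P (k - l) (downIter k l d)

/-- `δ^{↑l}` (a canonical formula of level `min k l`). -/
def cfUp {n : ℕ} (P : Finset ℕ) (k l : ℕ) (d : CData n) : Formula n :=
  toFormula P (min k l) (upD k l d)

/-- Literal elimination: `φ^p` replaces every occurrence of `¬p` by `⊤` and subsequently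
every remaining occurrence of `p` by `⊤`. -/
def elim {n : ℕ} (p : ℕ) : Formula n → Formula n
  | .top => .top
  | .bot => .bot
  | .atom q => if q = p then .top else .atom q
  | .neg (.atom q) => if q = p then .top else .neg (.atom q)
  | .neg φ => .neg (elim p φ)
  | .and φ ψ => .and (elim p φ) (elim p ψ)
  | .or φ ψ => .or (elim p φ) (elim p ψ)
  | .D B φ => .D B (elim p φ)

/-! ### Auxiliary lemmas -/

section Aux

variable {n : ℕ}

@[simp] lemma sat_top {W : Type} {M : KModel n W} {w : W} : Sat M w .top ↔ True := Iff.rfl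
@[simp] lemma sat_bot {W : Type} {M : KModel n W} {w : W} : Sat M w .bot ↔ False := Iff.rfl
@[simp] lemma sat_atom {W : Type} {M : KModel n W} {w : W} {q : ℕ} :
    Sat M w (.atom q) ↔ q ∈ M.V w := Iff.rfl
@[simp] lemma sat_neg {W : Type} {M : KModel n W} {w : W} {φ : Formula n} :
    Sat M w (.neg φ) ↔ ¬ Sat M w φ := Iff.rfl
@[simp] lemma sat_and {W : Type} {M : KModel n W} {w : W} {φ ψ : Formula n} :
    Sat M w (.and φ ψ) ↔ Sat M w φ ∧ Sat M w ψ := Iff.rfl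
@[simp] lemma sat_or {W : Type} {M : KModel n W} {w : W} {φ ψ : Formula n} :
    Sat M w (.or φ ψ) ↔ Sat M w φ ∨ Sat M w ψ := Iff.rfl
@[simp] lemma sat_D {W : Type} {M : KModel n W} {w : W} {B : {B : Finset (Fin n) // B.Nonempty}}
    {φ : Formula n} : Sat M w (.D B φ) ↔ ∀ t, M.RB B.1 w t → Sat M t φ := Iff.rfl

lemma sat_bigAnd {W : Type} {M : KModel n W} {w : W} {L : List (Formula n)} :
    Sat M w (bigAnd L) ↔ ∀ φ ∈ L, Sat M w φ := by
  induction L with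
  | nil => simp [bigAnd]
  | cons a l ih => simp [bigAnd, ih]

lemma sat_bigOr {W : Type} {M : KModel n W} {w : W} {L : List (Formula n)} :
    Sat M w (bigOr L) ↔ ∃ φ ∈ L, Sat M w φ := by
  induction L with
  | nil => simp [bigOr]
  | cons a l ih => simp [bigOr, ih]

@[simp] lemma elim_top {p : ℕ} : elim (n := n) p .top = .top := rfl
@[simp] lemma elim_bot {p : ℕ} : elim (n := n) p .bot = .bot := rfl
@[simp] lemma elim_and {p : ℕ} {φ ψ : Formula n} :
    elim p (.and φ ψ) = .and (elim p φ) (elim p ψ) := rfl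
@[simp] lemma elim_or {p : ℕ} {φ ψ : Formula n} :
    elim p (.or φ ψ) = .or (elim p φ) (elim p ψ) := rfl
@[simp] lemma elim_D {p : ℕ} {B : {B : Finset (Fin n) // B.Nonempty}} {φ : Formula n} :
    elim p (.D B φ) = .D B (elim p φ) := rfl
@[simp] lemma elim_atom {p q : ℕ} :
    elim (n := n) p (.atom q) = if q = p then .top else .atom q := rfl
@[simp] lemma elim_neg_atom {p q : ℕ} :
    elim (n := n) p (.neg (.atom q)) = if q = p then .top else .neg (.atom q) := rfl
lemma elim_neg_D {p : ℕ} {B : {B : Finset (Fin n) // B.Nonempty}} {φ : Formula n} :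
    elim p (.neg (.D B φ)) = .neg (.D B (elim p φ)) := rfl

lemma elim_bigAnd {p : ℕ} {L : List (Formula n)} :
    elim p (bigAnd L) = bigAnd (L.map (elim p)) := by
  induction L with
  | nil => rfl
  | cons a l ih => simp [bigAnd, ih]

lemma elim_bigOr {p : ℕ} {L : List (Formula n)} :
    elim p (bigOr L) = bigOr (L.map (elim p)) := by
  induction L with
  | nil => rfl
  | cons a l ih => simp [bigOr, ih]

lemma elim_neg_bigAnd {p : ℕ} (L : List (Formula n)) :
    elim p (.neg (bigAnd L)) = .neg (elim p (bigAnd L)) := by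
  cases L <;> rfl

lemma elim_neg_toFormula {p : ℕ} {P : Finset ℕ} {l : ℕ} {c : CData n} :
    elim p (.neg (toFormula P l c)) = .neg (elim p (toFormula P l c)) := by
  cases l with
  | zero => rw [toFormula, minterm]; exact elim_neg_bigAnd _
  | succ k => rfl

end Aux

section Lists

variable {n : ℕ}

lemma mem_insertF {φ x : Formula n} {L : List (Formula n)} (h : x ∈ insertF φ L) :
    x = φ ∨ x ∈ L := by
  induction L with
  | nil => simp [insertF] at h; exact Or.inl h
  | cons ψ l ih =>
    unfold insertF at h
    split at h
    · rcases List.mem_cons.1 h with h | h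
      · exact Or.inl h
      · exact Or.inr h
    · split at h
      · exact Or.inr h
      · rcases List.mem_cons.1 h with h | h
        · exact Or.inr (by simp [h])
        · rcases ih h with h | h
          · exact Or.inl h
          · exact Or.inr (by simp [h])

lemma mem_normList {x : Formula n} {L : List (Formula n)} (h : x ∈ normList L) : x ∈ L := by
  induction L with
  | nil => simpa [normList] using h
  | cons a l ih =>
    rcases mem_insertF (show x ∈ insertF a (normList l) from h) with h | h
    · simp [h]
    · exact List.mem_cons_of_mem _ (ih h)

lemma insertF_ne_nil {φ : Formula n} {L : List (Formula n)} : insertF φ L ≠ [] := by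
  cases L with
  | nil => simp [insertF]
  | cons ψ l =>
    rw [insertF]
    split
    · simp
    · split <;> simp

lemma normList_cons_ne_nil {a : Formula n} {l : List (Formula n)} :
    normList (a :: l) ≠ [] := insertF_ne_nil

lemma pairwise_insertF {φ : Formula n} {L : List (Formula n)}
    (h : L.Pairwise fun a b => fcode a < fcode b) :
    (insertF φ L).Pairwise fun a b => fcode a < fcode b := by
  induction L with
  | nil => simp [insertF]
  | cons ψ l ih =>
    rw [List.pairwise_cons] at h
    obtain ⟨h1, h2⟩ := h
    unfold insertF
    split
    next hlt =>
      refine List.pairwise_cons.2 ⟨?_, List.pairwise_cons.2 ⟨h1, h2⟩⟩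
      intro x hx
      rcases List.mem_cons.1 hx with rfl | hx
      · exact hlt
      · exact hlt.trans (h1 x hx)
    next hnlt =>
      split
      next => exact List.pairwise_cons.2 ⟨h1, h2⟩
      next hne =>
        refine List.pairwise_cons.2 ⟨?_, ih h2⟩
        intro x hx
        rcases mem_insertF hx with rfl | hx
        · omega
        · exact h1 x hx

lemma pairwise_normList {L : List (Formula n)} :
    (normList L).Pairwise fun a b => fcode a < fcode b := by
  induction L with
  | nil => simp [normList]
  | cons a l ih => exact pairwise_insertF ih

lemma eq_of_sorted : ∀ (L₁ L₂ : List (Formula n)),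
    L₁.Pairwise (fun a b => fcode a < fcode b) →
    L₂.Pairwise (fun a b => fcode a < fcode b) →
    (∀ x, x ∈ L₁ ↔ x ∈ L₂) → L₁ = L₂ := by
  intro L₁
  induction L₁ with
  | nil =>
    intro L₂ _ _ hmem
    cases L₂ with
    | nil => rfl
    | cons b l₂ => exact absurd ((hmem b).2 (by simp)) (by simp)
  | cons a l₁ ih =>
    intro L₂ h1 h2 hmem
    cases L₂ with
    | nil => exact absurd ((hmem a).1 (by simp)) (by simp)
    | cons b l₂ =>
      rw [List.pairwise_cons] at h1 h2
      have hab : a = b := by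
        rcases List.mem_cons.1 ((hmem a).1 (by simp)) with h | h
        · exact h
        · have hba : fcode b < fcode a := h2.1 a h
          rcases List.mem_cons.1 ((hmem b).2 (by simp)) with h' | h'
          · exact absurd (h' ▸ hba) (lt_irrefl _)
          · exact absurd (hba.trans (h1.1 b h')) (lt_irrefl _)
      subst hab
      have htail : ∀ x, x ∈ l₁ ↔ x ∈ l₂ := by
        intro x
        constructor
        · intro hx
          rcases List.mem_cons.1 ((hmem x).1 (List.mem_cons_of_mem _ hx)) with rfl | h'
          · exact absurd (h1.1 x hx) (lt_irrefl _)
          · exact h'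
        · intro hx
          rcases List.mem_cons.1 ((hmem x).2 (List.mem_cons_of_mem _ hx)) with rfl | h'
          · exact absurd (h2.1 x hx) (lt_irrefl _)
          · exact h'
      rw [ih l₂ h1.2 h2.2 htail]

end Lists

section Minterm

variable {n : ℕ}

lemma sat_minterm {W : Type} {M : KModel n W} {w : W} {P S : Finset ℕ} :
    Sat M w (minterm (n := n) P S) ↔ ∀ q ∈ P, (q ∈ M.V w ↔ q ∈ S) := by
  rw [minterm, sat_bigAnd]
  constructor
  · intro h q hq
    have := h _ (List.mem_map_of_mem ((Finset.mem_sort _).2 hq))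
    by_cases hqS : q ∈ S <;> simp [hqS] at this ⊢ <;> tauto
  · intro h φ hφ
    obtain ⟨q, hq, rfl⟩ := List.mem_map.1 hφ
    have hq' := (Finset.mem_sort _).1 hq
    by_cases hqS : q ∈ S <;> simp [hqS]
    · exact (h q hq').2 hqS
    · exact fun h' => hqS ((h q hq').1 h')

lemma sat_elim_minterm {W : Type} {M : KModel n W} {w : W} {p : ℕ} {P S : Finset ℕ} :
    Sat M w (elim p (minterm (n := n) P S)) ↔ ∀ q ∈ P, q ≠ p → (q ∈ M.V w ↔ q ∈ S) := by
  rw [minterm, elim_bigAnd, sat_bigAnd]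
  constructor
  · intro h q hq hqp
    have := h _ (List.mem_map_of_mem
      (List.mem_map_of_mem ((Finset.mem_sort _).2 hq)))
    by_cases hqS : q ∈ S <;> simp [hqS, hqp] at this ⊢ <;> tauto
  · intro h φ hφ
    obtain ⟨φ', hφ', rfl⟩ := List.mem_map.1 hφ
    obtain ⟨q, hq, rfl⟩ := List.mem_map.1 hφ'
    have hq' := (Finset.mem_sort _).1 hq
    by_cases hqp : q = p
    · subst hqp
      by_cases hqS : q ∈ S <;> simp [hqS]
    · by_cases hqS : q ∈ S <;> simp [hqS, hqp]
      · exact (h q hq' hqp).2 hqS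
      · exact fun h' => hqS ((h q hq' hqp).1 h')

lemma minterm_congr {P S₁ S₂ : Finset ℕ} (h : ∀ q ∈ P, (q ∈ S₁ ↔ q ∈ S₂)) :
    minterm (n := n) P S₁ = minterm (n := n) P S₂ := by
  rw [minterm, minterm]
  congr 1
  refine List.map_congr_left fun q hq => ?_
  have hq' := (Finset.mem_sort _).1 hq
  by_cases hqS : q ∈ S₁
  · rw [if_pos hqS, if_pos ((h q hq').1 hqS)]
  · rw [if_neg hqS, if_neg (fun h' => hqS ((h q hq').2 h'))]

end Minterm

section Subsets

variable {n : ℕ}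

lemma natToFinset_surj (B : Finset (Fin n)) : ∃ m < 2 ^ n, natToFinset n m = B := by
  have hinj : Function.Injective (fun m : Fin (2 ^ n) => natToFinset n m.1) := by
    intro m₁ m₂ h
    ext1
    refine Nat.eq_of_testBit_eq fun j => ?_
    by_cases hj : j < n
    · have := congrArg (fun s => (⟨j, hj⟩ : Fin n) ∈ s) h
      simp only [natToFinset, Finset.mem_filter, Finset.mem_univ, true_and, eq_iff_iff] at this
      exact Bool.coe_iff_coe.1 this
    · rw [Nat.testBit_eq_false_of_lt, Nat.testBit_eq_false_of_lt]
      · exact lt_of_lt_of_le m₂.2 (Nat.pow_le_pow_right (by norm_num) (le_of_not_gt hj))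
      · exact lt_of_lt_of_le m₁.2 (Nat.pow_le_pow_right (by norm_num) (le_of_not_gt hj))
  have hcard : Fintype.card (Fin (2 ^ n)) = Fintype.card (Finset (Fin n)) := by
    simp [Fintype.card_finset]
  have hbij := (Fintype.bijective_iff_injective_and_card _).2 ⟨hinj, hcard⟩
  obtain ⟨m, hm⟩ := hbij.2 B
  exact ⟨m.1, m.2, hm⟩

lemma mem_neSubsets (B : {B : Finset (Fin n) // B.Nonempty}) : B ∈ neSubsets n := by
  obtain ⟨m, hm, hBm⟩ := natToFinset_surj B.1
  rw [neSubsets, List.mem_filterMap]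
  refine ⟨B.1, ?_, ?_⟩
  · rw [List.mem_map]
    exact ⟨m, List.mem_range.2 hm, hBm⟩
  · rw [dif_pos B.2]

end Subsets

section Nabla

variable {n : ℕ}

lemma sat_nabla_box {W : Type} {M : KModel n W} {w w₂ : W}
    {B : {B : Finset (Fin n) // B.Nonempty}} {Φ : List (Formula n)}
    (h : Sat M w (nabla B Φ)) (hR : M.RB B.1 w w₂) : ∃ φ ∈ Φ, Sat M w₂ φ := by
  rw [nabla, sat_and, sat_D] at h
  exact sat_bigOr.1 (h.1 w₂ hR)

lemma sat_nabla_dia {W : Type} {M : KModel n W} {w : W}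
    {B : {B : Finset (Fin n) // B.Nonempty}} {Φ : List (Formula n)}
    (h : Sat M w (nabla B Φ)) {φ : Formula n} (hφ : φ ∈ Φ) :
    ∃ w₂, M.RB B.1 w w₂ ∧ Sat M w₂ φ := by
  rw [nabla, sat_and, sat_bigAnd] at h
  have h2 := h.2 _ (List.mem_map_of_mem hφ)
  rw [sat_neg, sat_D] at h2
  by_contra hc
  push_neg at hc
  exact h2 fun t hR => hc t hR

lemma sat_toFormula_succ {W : Type} {M : KModel n W} {w : W} {P : Finset ℕ} {l : ℕ}
    {c : CData n} (h : Sat M w (toFormula P (l + 1) c))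
    (B : {B : Finset (Fin n) // B.Nonempty}) :
    Sat M w (nabla B (normList ((CData.succ c B.1).map fun c' => toFormula P l c'))) := by
  rw [toFormula, sat_and, sat_bigAnd] at h
  exact h.2 _ (List.mem_map_of_mem (mem_neSubsets B))

lemma elim_nabla_toFormula {p : ℕ} {P : Finset ℕ} {l : ℕ}
    {B : {B : Finset (Fin n) // B.Nonempty}} {L : List (CData n)} :
    elim p (nabla B (normList (L.map fun c' => toFormula P l c'))) =
      nabla B ((normList (L.map fun c' => toFormula P l c')).map (elim p)) := by
  rw [nabla, nabla, elim_and, elim_D, elim_bigOr, elim_bigAnd, List.map_map, List.map_map]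
  congr 2
  refine List.map_congr_left fun φ hφ => ?_
  obtain ⟨c, -, rfl⟩ := List.mem_map.1 (mem_normList hφ)
  simp only [Function.comp]
  rw [elim_neg_D, elim_neg_toFormula]

lemma sat_elim_toFormula_succ {W : Type} {M : KModel n W} {w : W} {p : ℕ} {P : Finset ℕ}
    {l : ℕ} {c : CData n} (h : Sat M w (elim p (toFormula P (l + 1) c)))
    (B : {B : Finset (Fin n) // B.Nonempty}) :
    Sat M w (nabla B ((normList ((CData.succ c B.1).map fun c' => toFormula P l c')).map
      (elim p))) := by
  rw [toFormula, elim_and, sat_and, elim_bigAnd, sat_bigAnd] at h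
  have := h.2 _ (List.mem_map_of_mem (f := elim p) (List.mem_map_of_mem (mem_neSubsets B)))
  rwa [elim_nabla_toFormula] at this

end Nabla

section Unique

variable {n : ℕ}

lemma cf_unique {P : Finset ℕ} : ∀ (l : ℕ) {W : Type} (M : KModel n W) (w : W)
    (c₁ c₂ : CData n), Sat M w (toFormula P l c₁) → Sat M w (toFormula P l c₂) →
    toFormula (n := n) P l c₁ = toFormula P l c₂ := by
  intro l
  induction l with
  | zero =>
    intro W M w c₁ c₂ h1 h2
    rw [toFormula] at h1 h2
    simp only [toFormula]
    rw [sat_minterm] at h1 h2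
    exact minterm_congr fun q hq => (h1 q hq).symm.trans (h2 q hq)
  | succ l ih =>
    intro W M w c₁ c₂ h1 h2
    have h1' := h1
    have h2' := h2
    rw [toFormula, sat_and] at h1' h2'
    have hm : minterm (n := n) P (CData.S c₁ ∩ P) = minterm P (CData.S c₂ ∩ P) :=
      minterm_congr fun q hq => (sat_minterm.1 h1'.1 q hq).symm.trans (sat_minterm.1 h2'.1 q hq)
    have step : ∀ ca cb : CData n,
        Sat M w (toFormula P (l + 1) ca) → Sat M w (toFormula P (l + 1) cb) →
        ∀ B : {B : Finset (Fin n) // B.Nonempty},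
        ∀ x ∈ normList ((CData.succ ca B.1).map fun c' => toFormula P l c'),
          x ∈ normList ((CData.succ cb B.1).map fun c' => toFormula P l c') := by
      intro ca cb ha hb B x hx
      obtain ⟨w₂, hR, hw₂⟩ := sat_nabla_dia (sat_toFormula_succ ha B) hx
      obtain ⟨y, hy, hw₂'⟩ := sat_nabla_box (sat_toFormula_succ hb B) hR
      obtain ⟨cx, -, rfl⟩ := List.mem_map.1 (mem_normList hx)
      obtain ⟨cy, -, rfl⟩ := List.mem_map.1 (mem_normList hy)
      rwa [ih M w₂ cx cy hw₂ hw₂']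
    simp only [toFormula]
    rw [hm]
    congr 2
    refine List.map_congr_left fun B hB => ?_
    congr 1
    exact eq_of_sorted _ _ pairwise_normList pairwise_normList
      fun x => ⟨step c₁ c₂ h1 h2 B x, step c₂ c₁ h2 h1 B x⟩

end Unique

section Construction

variable {n : ℕ} {WN W' : Type}

/-- Invariant: `t` satisfies some canonical formula of level `l` whose literal elimination
holds at `u`. -/
def Inv (N : KModel n WN) (M' : KModel n W') (P : Finset ℕ) (p : ℕ)
    (t : WN) (u : W') (l : ℕ) : Prop :=
  ∃ c : CData n, Sat N t (toFormula P l c) ∧ Sat M' u (elim p (toFormula P l c))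

/-- The synchronized product model used in the construction. -/
def prodModel (N : KModel n WN) (M' : KModel n W') (P : Finset ℕ) (p : ℕ) :
    KModel n ((WN × W' × ℕ) ⊕ W') where
  R i x y :=
    match x, y with
    | .inl (t, u, l), .inl (t₂, v, m) =>
        m + 1 = l ∧ N.R i t t₂ ∧ M'.R i u v ∧ Inv N M' P p t₂ v m
    | .inl (t, u, l), .inr v => (l = 0 ∨ ¬ Inv N M' P p t u l) ∧ M'.R i u v
    | .inr u, .inr v => M'.R i u v
    | .inr _, .inl _ => False
  V x :=
    match x with
    | .inl (t, u, _) => {q | if q = p then q ∈ N.V t else q ∈ M'.V u}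
    | .inr u => M'.V u

variable {N : KModel n WN} {M' : KModel n W'} {P : Finset ℕ} {p : ℕ}

lemma prod_RB_inl_inl {B : Finset (Fin n)} (hB : B.Nonempty) {t t₂ : WN} {u v : W'}
    {l m : ℕ} :
    (prodModel N M' P p).RB B (.inl (t, u, l)) (.inl (t₂, v, m)) ↔
      m + 1 = l ∧ N.RB B t t₂ ∧ M'.RB B u v ∧ Inv N M' P p t₂ v m := by
  obtain ⟨i₀, hi₀⟩ := hB
  constructor
  · intro h
    obtain ⟨h1, -, -, h4⟩ := h i₀ hi₀
    exact ⟨h1, fun i hi => (h i hi).2.1, fun i hi => (h i hi).2.2.1, h4⟩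
  · rintro ⟨h1, h2, h3, h4⟩ i hi
    exact ⟨h1, h2 i hi, h3 i hi, h4⟩

lemma prod_RB_inl_inr {B : Finset (Fin n)} (hB : B.Nonempty) {t : WN} {u v : W'} {l : ℕ} :
    (prodModel N M' P p).RB B (.inl (t, u, l)) (.inr v) ↔
      (l = 0 ∨ ¬ Inv N M' P p t u l) ∧ M'.RB B u v := by
  obtain ⟨i₀, hi₀⟩ := hB
  constructor
  · intro h
    exact ⟨(h i₀ hi₀).1, fun i hi => (h i hi).2⟩
  · rintro ⟨h1, h2⟩ i hi
    exact ⟨h1, h2 i hi⟩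

lemma prod_RB_inr_inr {B : Finset (Fin n)} {u v : W'} :
    (prodModel N M' P p).RB B (.inr u) (.inr v) ↔ M'.RB B u v := Iff.rfl

lemma prod_RB_inr_inl {B : Finset (Fin n)} (hB : B.Nonempty) {u : W'} {y : WN × W' × ℕ} :
    ¬ (prodModel N M' P p).RB B (.inr u) (.inl y) := by
  obtain ⟨i₀, hi₀⟩ := hB
  intro h
  obtain ⟨t₂, v, m⟩ := y
  exact (h i₀ hi₀)

lemma prod_V_inl {t : WN} {u : W'} {l : ℕ} {q : ℕ} :
    q ∈ (prodModel N M' P p).V (.inl (t, u, l)) ↔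
      if q = p then q ∈ N.V t else q ∈ M'.V u := Iff.rfl

/-- Main satisfaction-transfer lemma. -/
lemma sat_prod : ∀ (l : ℕ) (c : CData n) (t : WN) (u : W'),
    Sat N t (toFormula P l c) → Sat M' u (elim p (toFormula P l c)) →
    Sat (prodModel N M' P p) (.inl (t, u, l)) (toFormula P l c) := by
  intro l
  induction l with
  | zero =>
    intro c t u h1 h2
    rw [toFormula] at h1 h2 ⊢
    rw [sat_minterm] at h1 ⊢
    rw [sat_elim_minterm] at h2
    intro q hq
    rw [prod_V_inl]
    by_cases hqp : q = p
    · rw [if_pos hqp]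
      exact h1 q hq
    · rw [if_neg hqp]
      exact h2 q hq hqp
  | succ l ih =>
    intro c t u h1 h2
    have hInv : Inv N M' P p t u (l + 1) := ⟨c, h1, h2⟩
    have h1' := h1
    have h2' := h2
    rw [toFormula, sat_and] at h1'
    rw [toFormula, sat_and]
    rw [toFormula, elim_and, sat_and] at h2'
    constructor
    · rw [sat_minterm]
      rw [sat_minterm] at h1'
      rw [sat_elim_minterm] at h2'
      intro q hq
      rw [prod_V_inl]
      by_cases hqp : q = p
      · rw [if_pos hqp]
        exact h1'.1 q hq
      · rw [if_neg hqp]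
        exact h2'.1 q hq hqp
    · rw [sat_bigAnd]
      intro φ hφ
      obtain ⟨B, hB, rfl⟩ := List.mem_map.1 hφ
      have hn1 := sat_toFormula_succ h1 B
      have hn2 := sat_elim_toFormula_succ h2 B
      rw [nabla, sat_and]
      constructor
      · rw [sat_D]
        intro y hy
        rcases y with ⟨t₂, v, m⟩ | v
        · obtain ⟨hm, hRN, hRM, c', hc'1, hc'2⟩ := (prod_RB_inl_inl B.2).1 hy
          have hml : m = l := by omega
          subst hml
          obtain ⟨ψ, hψ, hψsat⟩ := sat_nabla_box hn1 hRN
          obtain ⟨cψ, -, rfl⟩ := List.mem_map.1 (mem_normList hψ)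
          have heq := cf_unique _ N t₂ c' cψ hc'1 hψsat
          rw [sat_bigOr]
          refine ⟨toFormula P _ cψ, hψ, ?_⟩
          rw [← heq]
          exact ih c' t₂ v hc'1 (by rw [heq] at hc'2 ⊢; exact hc'2)
        · rcases (prod_RB_inl_inr B.2).1 hy with ⟨h0 | hni, -⟩
          · exact absurd h0 (by omega)
          · exact absurd hInv hni
      · rw [sat_bigAnd]
        intro ξ hξ
        obtain ⟨φ, hφ', rfl⟩ := List.mem_map.1 hξ
        obtain ⟨cφ, -, rfl⟩ := List.mem_map.1 (mem_normList hφ')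
        obtain ⟨t₂, hRN, ht₂⟩ := sat_nabla_dia hn1 hφ'
        obtain ⟨v, hRM, hv⟩ := sat_nabla_dia hn2 (List.mem_map_of_mem (f := elim p) hφ')
        rw [sat_neg, sat_D]
        intro hall
        have hy : (prodModel N M' P p).RB B.1 (.inl (t, u, l + 1)) (.inl (t₂, v, l)) :=
          (prod_RB_inl_inl B.2).2 ⟨rfl, hRN, hRM, cφ, ht₂, hv⟩
        exact hall _ hy (ih cφ t₂ v ht₂ hv)

lemma serial_prod (hN : ∀ i, Serial (N.R i)) (hM' : ∀ i, Serial (M'.R i)) (i : Fin n) :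
    Serial ((prodModel N M' P p).R i) := by
  rintro (⟨t, u, l⟩ | u)
  case inr =>
    obtain ⟨v, hv⟩ := hM' i u
    exact ⟨.inr v, hv⟩
  case inl =>
    by_cases hI : Inv N M' P p t u l
    · match l, hI with
      | 0, _ =>
        obtain ⟨v, hv⟩ := hM' i u
        exact ⟨.inr v, Or.inl rfl, hv⟩
      | (m + 1), ⟨c, h1, h2⟩ =>
        have hsing : ({i} : Finset (Fin n)).Nonempty := Finset.singleton_nonempty i
        have hn1 := sat_toFormula_succ h1 ⟨{i}, hsing⟩
        have hn2 := sat_elim_toFormula_succ h2 ⟨{i}, hsing⟩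
        cases hΦ : normList ((CData.succ c {i}).map fun c' => toFormula P m c') with
        | nil =>
          obtain ⟨t₂, ht₂⟩ := hN i t
          have hRB : N.RB {i} t t₂ := by
            intro j hj
            rw [Finset.mem_singleton] at hj
            subst hj
            exact ht₂
          obtain ⟨φ, hφ, -⟩ := sat_nabla_box hn1 hRB
          rw [hΦ] at hφ
          exact absurd hφ List.not_mem_nil
        | cons ψ Ψ =>
          have hψ : ψ ∈ normList ((CData.succ c {i}).map fun c' => toFormula P m c') := by
            rw [hΦ]
            exact List.mem_cons_self
          obtain ⟨cψ, -, hcψ⟩ := List.mem_map.1 (mem_normList hψ)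
          obtain ⟨t₂, hRN, ht₂⟩ := sat_nabla_dia hn1 hψ
          obtain ⟨v, hRM, hv⟩ := sat_nabla_dia hn2 (List.mem_map_of_mem (f := elim p) hψ)
          refine ⟨.inl (t₂, v, m), rfl, hRN i (Finset.mem_singleton_self i),
            hRM i (Finset.mem_singleton_self i), cψ, ?_, ?_⟩
          · rw [hcψ]
            exact ht₂
          · rw [hcψ]
            exact hv
    · obtain ⟨v, hv⟩ := hM' i u
      exact ⟨.inr v, Or.inr hI, hv⟩

lemma bisim_prod {t : WN} {s' : W'} {k : ℕ} (hI : Inv N M' P p t s' k) :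
    CollPBisim (prodModel N M' P p) (.inl (t, s', k)) M' s' p := by
  refine ⟨fun x u' =>
    match x with
    | .inl (t, u, l) => u' = u ∧ Inv N M' P p t u l
    | .inr u => u' = u, ⟨rfl, hI⟩, ?_⟩
  rintro (⟨t₀, u, l⟩ | u) u' hρ
  · obtain ⟨rfl, hInv⟩ := hρ
    refine ⟨?_, ?_, ?_⟩
    · intro q hq
      rw [prod_V_inl, if_neg hq]
    · intro B hB v hv
      rcases v with ⟨t₂, v, m⟩ | v
      · obtain ⟨hm, hRN, hRM, hInv₂⟩ := (prod_RB_inl_inl hB).1 hv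
        exact ⟨v, hRM, rfl, hInv₂⟩
      · obtain ⟨-, hRM⟩ := (prod_RB_inl_inr hB).1 hv
        exact ⟨v, hRM, rfl⟩
    · intro B hB v' hv'
      cases l with
      | zero => exact ⟨.inr v', (prod_RB_inl_inr hB).2 ⟨Or.inl rfl, hv'⟩, rfl⟩
      | succ m =>
        obtain ⟨c, h1, h2⟩ := hInv
        have hn1 := sat_toFormula_succ h1 ⟨B, hB⟩
        have hn2 := sat_elim_toFormula_succ h2 ⟨B, hB⟩
        obtain ⟨ξ, hξ, hv'ξ⟩ := sat_nabla_box hn2 hv'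
        obtain ⟨φ, hφ, rfl⟩ := List.mem_map.1 hξ
        obtain ⟨cφ, -, rfl⟩ := List.mem_map.1 (mem_normList hφ)
        obtain ⟨t₂, hRN, ht₂⟩ := sat_nabla_dia hn1 hφ
        exact ⟨.inl (t₂, v', m), (prod_RB_inl_inl hB).2 ⟨rfl, hRN, hv', cφ, ht₂, hv'ξ⟩,
          rfl, cφ, ht₂, hv'ξ⟩
  · subst hρ
    refine ⟨fun q _ => Iff.rfl, ?_, ?_⟩
    · intro B hB v hv
      rcases v with y | v
      · exact absurd hv (prod_RB_inr_inl hB)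
      · exact ⟨v, hv, rfl⟩
    · intro B hB v' hv'
      exact ⟨.inr v', hv', rfl⟩

end Construction

/-- model construction for `K_n D` and `D_n D`. -/
theorem construction_K_D {n : ℕ} (L : MSys) (hL : L = MSys.K ∨ L = MSys.D)
    (P : Finset ℕ) (p : ℕ) (hp : p ∈ P) (k : ℕ) (d : CData n)
    (hδ : SatL L (cf P k d))
    (W' : Type) (M' : KModel n W') (s' : W') (hM' : IsModel L M')
    (hs' : Sat M' s' (elim p (cf P k d))) :
    ∃ (W : Type) (M : KModel n W) (s : W),
      IsModel L M ∧ Sat M s (cf P k d) ∧ CollPBisim M s M' s' p := by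
  obtain ⟨WN, N, tN, hN, htN⟩ := hδ
  rw [cf] at htN hs'
  refine ⟨(WN × W' × ℕ) ⊕ W', prodModel N M' P p, .inl (tN, s', k), ?_, ?_, ?_⟩
  · rcases hL with rfl | rfl
    · trivial
    · exact fun i => serial_prod hN hM' i
  · rw [cf]
    exact sat_prod k d tN s' htN hs'
  · exact bisim_prod ⟨d, htN, hs'⟩

end DKLogic
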